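/- Let D ⊆ ℝ^d be a finite set written as a union D = D_1 ∪ D_2 ∪ ... ∪ D_m of finite subsets, let q ∈ ℝ^d be a query point, and let S = ⋃_{i=1}^m Skyline(D_i, q) be the union of the skylines of the parts. Then the dynamic skyline of D at q equals the dynamic skyline of S at q: Skyline(D, q) = Skyline(S, q). (This is the correctness of answering a skyline query by combining the results of the ⌈n/l⌉ generalized-tiling index structures.) -/

import Mathlib

/-- `p` dominates `p'` with respect to query point `q`. -/
def dominates {d : ℕ} (q p p' : Fin d → ℝ) : Prop :=
  (∀ i, |p i - q i| ≤ |p' i - q i|) ∧ (∃ i, |p i - q i| < |p' i - q i|)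

/-- Dynamic skyline of `D` at query point `q`. -/
def skyline {d : ℕ} (D : Set (Fin d → ℝ)) (q : Fin d → ℝ) : Set (Fin d → ℝ) :=
  {p | p ∈ D ∧ ∀ p' ∈ D, ¬ dominates q p' p}

lemma dominates_trans {d : ℕ} (q : Fin d → ℝ) {a b c : Fin d → ℝ}
    (h1 : dominates q a b) (h2 : dominates q b c) : dominates q a c := by
  obtain ⟨h1l, i, h1s⟩ := h1
  obtain ⟨h2l, _⟩ := h2
  exact ⟨fun j => (h1l j).trans (h2l j), ⟨i, lt_of_lt_of_le h1s (h2l i)⟩⟩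

lemma dominates_irrefl {d : ℕ} (q : Fin d → ℝ) (a : Fin d → ℝ) : ¬ dominates q a a := by
  rintro ⟨_, i, hi⟩; exact lt_irrefl _ hi

/-- In a finite set, every point is (weakly) dominated by a skyline point. -/
lemma exists_skyline_dominates {d : ℕ} (q : Fin d → ℝ) (A : Set (Fin d → ℝ))
    (hA : A.Finite) {p : Fin d → ℝ} (hp : p ∈ A) :
    ∃ s ∈ skyline A q, s = p ∨ dominates q s p := by
  haveI : IsIrrefl (Fin d → ℝ) (dominates q) := ⟨dominates_irrefl q⟩
  haveI : IsTrans (Fin d → ℝ) (dominates q) := ⟨fun _ _ _ => dominates_trans q⟩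
  haveI : IsStrictOrder (Fin d → ℝ) (dominates q) := ⟨⟩
  set T : Set (Fin d → ℝ) := {x | x ∈ A ∧ (x = p ∨ dominates q x p)} with hT
  have hTfin : T.Finite := hA.subset (fun x hx => hx.1)
  have hwf : WellFounded (fun a b : T => dominates q a.1 b.1) := hTfin.wellFoundedOn (r := dominates q)
  obtain ⟨⟨s, hsT⟩, -, hmin⟩ := hwf.has_min Set.univ ⟨⟨p, hp, Or.inl rfl⟩, trivial⟩
  refine ⟨s, ⟨hsT.1, fun y hy hyd => ?_⟩, hsT.2⟩
  have hyT : y ∈ T := by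
    refine ⟨hy, ?_⟩
    rcases hsT.2 with rfl | hsp
    · exact Or.inr hyd
    · exact Or.inr (dominates_trans q hyd hsp)
  exact hmin ⟨y, hyT⟩ trivial hyd

theorem skyline_eq_skyline_union_of_part_skylines {d m : ℕ} (D : Set (Fin d → ℝ))
    (P : Fin m → Set (Fin d → ℝ)) (hfin : ∀ i, (P i).Finite)
    (hD : D = ⋃ i, P i) (q : Fin d → ℝ) :
    skyline D q = skyline (⋃ i, skyline (P i) q) q := by
  have hSsub : (⋃ i, skyline (P i) q) ⊆ D := by
    rintro x hx
    obtain ⟨i, hi⟩ := Set.mem_iUnion.mp hx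
    exact hD ▸ Set.mem_iUnion.mpr ⟨i, hi.1⟩
  ext p
  constructor
  · rintro ⟨hpD, hpn⟩
    obtain ⟨i, hpi⟩ := Set.mem_iUnion.mp (hD ▸ hpD)
    refine ⟨Set.mem_iUnion.mpr ⟨i, hpi, fun y hy => hpn y (hD ▸ Set.mem_iUnion.mpr ⟨i, hy⟩)⟩,
      fun y hy => hpn y (hSsub hy)⟩
  · rintro ⟨hpS, hpn⟩
    refine ⟨hSsub hpS, fun y hy hyd => ?_⟩
    obtain ⟨i, hyi⟩ := Set.mem_iUnion.mp (hD ▸ hy)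
    obtain ⟨s, hs, hsw⟩ := exists_skyline_dominates q (P i) (hfin i) hyi
    have hsd : dominates q s p := by
      rcases hsw with rfl | hsy
      · exact hyd
      · exact dominates_trans q hsy hyd
    exact hpn s (Set.mem_iUnion.mpr ⟨i, hs⟩) hsd
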